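/- arXiv:2203.03316 — 3 statements merged into one kernel-verified Lean document; each statement's English description precedes it below -/
import Mathlib

section
/- Let C = [-1,1]² ⊂ ℝ² and V(x) = d(x,C)⁴, the fourth power of the Euclidean distance to C. Then the trajectory y(t) = (2 + e^{-t}, sin t) satisfies ẏ_i(t) · (∂V/∂x_i)(y(t)) ≤ 0 for i = 1,2 and all t ≥ 0, but y does not converge. -/
open Filter Topology

noncomputable def q (s : ℝ) : ℝ := max (|s| - 1) 0 ^ 2

lemma q_nonneg (s : ℝ) : 0 ≤ q s := sq_nonneg _

lemma q_eq_zero {s : ℝ} (h : |s| ≤ 1) : q s = 0 := by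
  simp [q, max_eq_right (by linarith : |s| - 1 ≤ 0)]

lemma q_hasDerivAt {s : ℝ} (hs : |s| ≤ 1) : HasDerivAt q 0 s := by
  rw [hasDerivAt_iff_isLittleO]
  have hO : (fun t => q t - q s - (t - s) * 0) =O[𝓝 s] (fun t => (t - s)^2) := by
    apply Asymptotics.IsBigO.of_bound 1
    filter_upwards with t
    have h1 : q t ≤ (t - s)^2 := by
      rcases le_or_gt (|t|) 1 with ht | ht
      · rw [q_eq_zero ht]; positivity
      · have hm : max (|t| - 1) 0 = |t| - 1 := max_eq_left (by linarith)
        rw [q, hm]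
        have h2 : |t| - 1 ≤ |t - s| := by
          have := abs_sub_abs_le_abs_sub t s
          linarith
        calc (|t| - 1)^2 ≤ |t - s|^2 := pow_le_pow_left₀ (by linarith) h2 2
          _ = (t - s)^2 := sq_abs _
    rw [q_eq_zero hs]
    simp only [mul_zero, sub_zero, one_mul]
    rw [Real.norm_eq_abs, Real.norm_eq_abs, abs_of_nonneg (q_nonneg t), ← sq_abs (t - s)]
    simpa [sq_abs] using h1
  refine hO.trans_isLittleO ?_
  have h0 : Tendsto (fun t : ℝ => t - s) (𝓝 s) (𝓝 0) := by
    have := ((continuous_id.sub continuous_const).tendsto s :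
      Tendsto (fun t : ℝ => t - s) (𝓝 s) (𝓝 (s - s)))
    convert this using 2; simp
    exact (sub_self s).symm
  simpa [Function.comp_def] using (Asymptotics.isLittleO_pow_pow (by norm_num : 1 < 2)).comp_tendsto h0

def Cbox : Set (EuclideanSpace ℝ (Fin 2)) :=
  {x | x 0 ∈ Set.Icc (-1 : ℝ) 1 ∧ x 1 ∈ Set.Icc (-1 : ℝ) 1}

lemma infDist_formula (x : EuclideanSpace ℝ (Fin 2)) (hx : 1 ≤ x 0) :
    Metric.infDist x Cbox = Real.sqrt ((x 0 - 1)^2 + q (x 1)) := by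
  have hne : Cbox.Nonempty := ⟨0, by constructor <;> constructor <;> norm_num⟩
  set c : EuclideanSpace ℝ (Fin 2) :=
    (WithLp.equiv 2 (Fin 2 → ℝ)).symm ![1, max (-1) (min 1 (x 1))] with hc
  have hc0 : c 0 = 1 := rfl
  have hc1 : c 1 = max (-1) (min 1 (x 1)) := rfl
  have hcmem : c ∈ Cbox := by
    refine ⟨⟨by rw [hc0]; norm_num, by rw [hc0]⟩, ?_, ?_⟩
    · rw [hc1]; exact le_max_left _ _
    · rw [hc1]; exact max_le (by norm_num) (min_le_left _ _)
  have hq1 : (x 1 - c 1)^2 = q (x 1) := by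
    rw [hc1]
    rcases le_or_gt (x 1) (-1) with h | h
    · have : max (-1 : ℝ) (min 1 (x 1)) = -1 := by
        rw [min_eq_right (by linarith), max_eq_left (by linarith)]
      rw [this, q, max_eq_left, abs_of_nonpos (by linarith)] <;> [ring; linarith [abs_of_nonpos (show x 1 ≤ 0 by linarith)]]
    · rcases le_or_gt (x 1) 1 with h2 | h2
      · have : max (-1 : ℝ) (min 1 (x 1)) = x 1 := by
          rw [min_eq_right h2, max_eq_right (by linarith)]
        rw [this, q_eq_zero (abs_le.mpr ⟨by linarith, h2⟩)]; ring
      · have : max (-1 : ℝ) (min 1 (x 1)) = 1 := by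
          rw [min_eq_left (by linarith), max_eq_right (by norm_num)]
        rw [this, q, max_eq_left (by rw [abs_of_pos (by linarith)]; linarith),
          abs_of_pos (by linarith)]
  have hdistc : dist x c = Real.sqrt ((x 0 - 1)^2 + q (x 1)) := by
    rw [EuclideanSpace.dist_eq, Fin.sum_univ_two, Real.dist_eq, Real.dist_eq,
      sq_abs, sq_abs, hc0, hq1]
  refine le_antisymm ?_ ?_
  · rw [← hdistc]; exact Metric.infDist_le_dist_of_mem hcmem
  · refine le_of_not_gt fun hlt => ?_
    obtain ⟨z, hz, hdz⟩ := (Metric.infDist_lt_iff hne).mp hlt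
    have hzd : Real.sqrt ((x 0 - 1)^2 + q (x 1)) ≤ dist x z := by
      rw [EuclideanSpace.dist_eq, Fin.sum_univ_two, Real.dist_eq, Real.dist_eq, sq_abs, sq_abs]
      apply Real.sqrt_le_sqrt
      have h0 : (x 0 - 1)^2 ≤ (x 0 - z 0)^2 := by
        have := hz.1.2
        have h1 : (0:ℝ) ≤ x 0 - 1 := by linarith
        have : x 0 - 1 ≤ x 0 - z 0 := by linarith
        nlinarith
      have h1 : q (x 1) ≤ (x 1 - z 1)^2 := by
        obtain ⟨ha, hb⟩ := hz.2
        rcases le_or_gt (|x 1|) 1 with h | h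
        · rw [q_eq_zero h]; positivity
        · rw [q, max_eq_left (by linarith)]
          rcases abs_cases (x 1) with ⟨he, _⟩ | ⟨he, _⟩
          · nlinarith
          · nlinarith
      linarith
    linarith

lemma F_hasFDerivAt (x : EuclideanSpace ℝ (Fin 2)) (h1 : |x 1| ≤ 1) :
    HasFDerivAt (fun z : EuclideanSpace ℝ (Fin 2) => ((z 0 - 1)^2 + q (z 1))^2)
      ((4 * (x 0 - 1)^3) • (EuclideanSpace.proj 0 : EuclideanSpace ℝ (Fin 2) →L[ℝ] ℝ)) x := by
  have hp0 : HasFDerivAt (fun z : EuclideanSpace ℝ (Fin 2) => z 0)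
      (EuclideanSpace.proj 0 : EuclideanSpace ℝ (Fin 2) →L[ℝ] ℝ) x :=
    (EuclideanSpace.proj (0 : Fin 2) : EuclideanSpace ℝ (Fin 2) →L[ℝ] ℝ).hasFDerivAt
  have hp1 : HasFDerivAt (fun z : EuclideanSpace ℝ (Fin 2) => z 1)
      (EuclideanSpace.proj 1 : EuclideanSpace ℝ (Fin 2) →L[ℝ] ℝ) x :=
    (EuclideanSpace.proj (1 : Fin 2) : EuclideanSpace ℝ (Fin 2) →L[ℝ] ℝ).hasFDerivAt
  have sq0 : HasDerivAt (fun r : ℝ => r ^ 2) (2 * (x 0 - 1)) (x 0 - 1) := by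
    simpa using hasDerivAt_pow 2 (x 0 - 1)
  have hA : HasFDerivAt (fun z : EuclideanSpace ℝ (Fin 2) => (z 0 - 1)^2)
      ((2 * (x 0 - 1)) • (EuclideanSpace.proj 0 : EuclideanSpace ℝ (Fin 2) →L[ℝ] ℝ)) x :=
    (sq0.comp_hasFDerivAt x (hp0.sub_const 1) :)
  have hB : HasFDerivAt (fun z : EuclideanSpace ℝ (Fin 2) => q (z 1))
      ((0:ℝ) • (EuclideanSpace.proj 1 : EuclideanSpace ℝ (Fin 2) →L[ℝ] ℝ)) x :=
    ((q_hasDerivAt h1).comp_hasFDerivAt x hp1 :)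
  have hin := hA.add hB
  have sq1 : HasDerivAt (fun r : ℝ => r ^ 2) (2 * ((x 0 - 1)^2 + q (x 1))) ((x 0 - 1)^2 + q (x 1)) := by
    simpa using hasDerivAt_pow 2 ((x 0 - 1)^2 + q (x 1))
  have := sq1.comp_hasFDerivAt x hin
  refine this.congr_fderiv ?_
  rw [q_eq_zero h1]
  simp only [zero_smul, add_zero, smul_smul, smul_add]
  congr 1
  ring


/-- For `V(x) = d(x, [-1,1]²)⁴` the trajectory `y(t) = (2 + e^{-t}, sin t)` satisfies
the coordinate-wise decrease condition but does not converge. -/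
theorem example_coordinatewise_decrease_no_convergence :
    let C : Set (EuclideanSpace ℝ (Fin 2)) :=
      {x | x 0 ∈ Set.Icc (-1 : ℝ) 1 ∧ x 1 ∈ Set.Icc (-1 : ℝ) 1}
    let V : EuclideanSpace ℝ (Fin 2) → ℝ := fun x => (Metric.infDist x C) ^ 4
    let y : ℝ → EuclideanSpace ℝ (Fin 2) := fun t =>
      (WithLp.equiv 2 (Fin 2 → ℝ)).symm ![2 + Real.exp (-t), Real.sin t]
    (∀ t : ℝ, 0 ≤ t → ∀ i : Fin 2,
        deriv (fun s => y s i) t * fderiv ℝ V (y t) (EuclideanSpace.single i 1) ≤ 0) ∧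
      ¬ ∃ L : EuclideanSpace ℝ (Fin 2), Tendsto y atTop (𝓝 L) := by
  intro C V y
  have hCbox : C = Cbox := rfl
  have hy0 : ∀ t, y t 0 = 2 + Real.exp (-t) := fun t => rfl
  have hy1 : ∀ t, y t 1 = Real.sin t := fun t => rfl
  constructor
  · intro t ht i
    -- fderiv computation
    have hyt0 : (1:ℝ) < y t 0 := by
      rw [hy0]; have := Real.exp_pos (-t); linarith
    have hsin : |y t 1| ≤ 1 := by rw [hy1]; exact Real.abs_sin_le_one t
    have hVF : V =ᶠ[𝓝 (y t)] (fun z : EuclideanSpace ℝ (Fin 2) => ((z 0 - 1)^2 + q (z 1))^2) := by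
      have hopen : IsOpen {z : EuclideanSpace ℝ (Fin 2) | 1 < z 0} :=
        isOpen_lt continuous_const (EuclideanSpace.proj (0 : Fin 2)).continuous
      filter_upwards [hopen.mem_nhds hyt0] with z hz
      have h1z : (1:ℝ) ≤ z 0 := le_of_lt hz
      show (Metric.infDist z C)^4 = _
      rw [hCbox, infDist_formula z h1z]
      have hnn : (0:ℝ) ≤ (z 0 - 1)^2 + q (z 1) := by
        have := q_nonneg (z 1); positivity
      rw [show (4:ℕ) = 2 * 2 from rfl, pow_mul, Real.sq_sqrt hnn]
    have hfd : fderiv ℝ V (y t) =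
        (4 * (y t 0 - 1)^3) • (EuclideanSpace.proj 0 : EuclideanSpace ℝ (Fin 2) →L[ℝ] ℝ) := by
      rw [hVF.fderiv_eq, (F_hasFDerivAt (y t) hsin).fderiv]
    rw [hfd]
    have hcube : (0:ℝ) ≤ 4 * (y t 0 - 1)^3 := by
      have : (0:ℝ) ≤ y t 0 - 1 := by linarith
      positivity
    match i with
    | 0 =>
      have hder : deriv (fun s => y s 0) t = -Real.exp (-t) := by
        have h : HasDerivAt (fun s : ℝ => 2 + Real.exp (-s)) (-Real.exp (-t)) t := by
          have := (Real.hasDerivAt_exp (-t)).comp t ((hasDerivAt_id t).neg)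
          simpa using this.const_add 2
        have : (fun s => y s 0) = (fun s : ℝ => 2 + Real.exp (-s)) := rfl
        rw [this, h.deriv]
      rw [hder]
      have happ : ((4 * (y t 0 - 1)^3) •
          (EuclideanSpace.proj 0 : EuclideanSpace ℝ (Fin 2) →L[ℝ] ℝ))
          (EuclideanSpace.single (0 : Fin 2) 1) = 4 * (y t 0 - 1)^3 := by
        simp [ContinuousLinearMap.smul_apply, PiLp.proj_apply, EuclideanSpace.single_apply]
      rw [happ]
      have := Real.exp_pos (-t)
      nlinarith
    | 1 =>
      have happ : ((4 * (y t 0 - 1)^3) •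
          (EuclideanSpace.proj 0 : EuclideanSpace ℝ (Fin 2) →L[ℝ] ℝ))
          (EuclideanSpace.single (1 : Fin 2) 1) = 0 := by
        simp [ContinuousLinearMap.smul_apply, PiLp.proj_apply, EuclideanSpace.single_apply]
      rw [happ, mul_zero]
  · rintro ⟨L, hL⟩
    have hsin : Tendsto Real.sin atTop (𝓝 (L 1)) := by
      have h := ((EuclideanSpace.proj (1 : Fin 2)).continuous.tendsto L).comp hL
      exact h
    have hu : Tendsto (fun n : ℕ => ((2 * n : ℕ) * Real.pi : ℝ)) atTop atTop := by
      have he : (fun n : ℕ => ((2 * n : ℕ) * Real.pi : ℝ)) = fun n : ℕ => (n : ℝ) * (2 * Real.pi) := by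
        funext n; push_cast; ring
      rw [he]
      exact Tendsto.atTop_mul_const (by positivity) tendsto_natCast_atTop_atTop
    have hv : Tendsto (fun n : ℕ => (Real.pi / 2 + n * (2 * Real.pi) : ℝ)) atTop atTop := by
      apply tendsto_atTop_add_const_left
      apply Tendsto.atTop_mul_const (by positivity : (0:ℝ) < 2 * Real.pi)
      exact tendsto_natCast_atTop_atTop
    have h0 : L 1 = 0 := by
      have := hsin.comp hu
      have heq : (Real.sin ∘ fun n : ℕ => ((2 * n : ℕ) * Real.pi : ℝ)) = fun _ => 0 := by
        funext n; exact Real.sin_nat_mul_pi (2 * n)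
      rw [heq] at this
      exact (tendsto_const_nhds_iff.mp this).symm
    have h1 : L 1 = 1 := by
      have := hsin.comp hv
      have heq : (Real.sin ∘ fun n : ℕ => (Real.pi / 2 + n * (2 * Real.pi) : ℝ)) = fun _ => 1 := by
        funext n
        show Real.sin (Real.pi / 2 + n * (2 * Real.pi)) = 1
        rw [Real.sin_add_nat_mul_two_pi, Real.sin_pi_div_two]
      rw [heq] at this
      exact (tendsto_const_nhds_iff.mp this).symm
    rw [h0] at h1; norm_num at h1
end

section
/- Let G be a connected graph on n vertices, and for each edge let f_{ij} : ℝ → ℝ be nonnegative, with f_{ij}(z) → ∞ as |z| → ∞. Define V(x) = ∑_i ∑_{j∼i} f_{ij}(x_j - x_i). Then the restriction of V to the hyperplane {x : ∑_i x_i = 0} is coercive: V(x) → ∞ as ‖x‖ → ∞ within that hyperplane; consequently V attains a global minimum on ℝⁿ. -/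
open Filter

lemma walk_bound {n : ℕ} {G : SimpleGraph (Fin n)} (x : Fin n → ℝ) (c : ℝ)
    (h : ∀ a b, G.Adj a b → |x a - x b| ≤ c) :
    ∀ {k ℓ : Fin n} (p : G.Walk k ℓ), |x k - x ℓ| ≤ c * p.length := by
  intro k ℓ p
  induction p with
  | nil => simp
  | @cons a b c' h' p ih =>
    have := abs_sub_le (x a) (x b) (x c')
    have h1 := h a b h'
    simp only [SimpleGraph.Walk.length_cons, Nat.cast_add, Nat.cast_one]
    nlinarith [ih]

lemma coercive_lb {M : ℝ} {f : ℝ → ℝ} (h : Tendsto f (cocompact ℝ) atTop) :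
    ∃ r : ℝ, 0 < r ∧ ∀ z : ℝ, r ≤ |z| → M < f z := by
  have h2 := h.eventually (eventually_gt_atTop M)
  rw [cocompact_eq_atBot_atTop, eventually_sup] at h2
  obtain ⟨a, ha⟩ := eventually_atBot.mp h2.1
  obtain ⟨b, hb⟩ := eventually_atTop.mp h2.2
  refine ⟨max (max (-a) b) 0 + 1, by positivity, fun z hz => ?_⟩
  rcases le_abs.mp hz with h1 | h1
  · exact hb z (by nlinarith [le_max_right (-a) b, le_max_left (max (-a) b) (0:ℝ)])
  · exact ha z (by nlinarith [le_max_left (-a) b, le_max_left (max (-a) b) (0:ℝ)])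


/-- For nonnegative coercive edge potentials on a connected graph, the energy
`V(x) = ∑ᵢ ∑_{j∼i} f_{ij}(x_j - x_i)` is coercive on the hyperplane `∑ xᵢ = 0`, and
consequently `V` attains a global minimum on `ℝⁿ`. -/
theorem graph_energy_coercive (n : ℕ) (G : SimpleGraph (Fin n)) [DecidableRel G.Adj]
    (hG : G.Connected) (f : Fin n → Fin n → ℝ → ℝ)
    (hcont : ∀ i j, Continuous (f i j))
    (hnonneg : ∀ i j z, 0 ≤ f i j z)
    (hcoer : ∀ i j, G.Adj i j → Tendsto (f i j) (cocompact ℝ) atTop) :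
    let V : EuclideanSpace ℝ (Fin n) → ℝ := fun x =>
      ∑ i : Fin n, ∑ j ∈ G.neighborFinset i, f i j (x j - x i)
    (∀ M : ℝ, ∃ R : ℝ, ∀ x : EuclideanSpace ℝ (Fin n),
        (∑ i, x i) = 0 → R ≤ ‖x‖ → M < V x) ∧
      ∃ xstar : EuclideanSpace ℝ (Fin n), ∀ x, V xstar ≤ V x := by
  intro V
  have hne : Nonempty (Fin n) := hG.nonempty
  have hn : 0 < n := Fin.pos hne.some
  have hn1 : (1:ℝ) ≤ n := by exact_mod_cast hn
  -- each single edge term is a lower bound for V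
  have hterm : ∀ (x : EuclideanSpace ℝ (Fin n)) i j, j ∈ G.neighborFinset i →
      f i j (x j - x i) ≤ V x := by
    intro x i j hj
    calc f i j (x j - x i)
        ≤ ∑ j' ∈ G.neighborFinset i, f i j' (x j' - x i) :=
          Finset.single_le_sum (f := fun j' => f i j' (x j' - x i))
            (fun j' _ => hnonneg i j' _) hj
      _ ≤ V x := Finset.single_le_sum
          (f := fun i' => ∑ j' ∈ G.neighborFinset i', f i' j' (x j' - x i'))
          (fun i' _ => Finset.sum_nonneg fun j' _ => hnonneg i' j' _) (Finset.mem_univ i)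
  -- strong coercivity on hyperplane
  have hcoerc : ∀ M : ℝ, ∃ R : ℝ, 0 ≤ R ∧ ∀ x : EuclideanSpace ℝ (Fin n),
      (∑ i, x i) = 0 → R ≤ ‖x‖ → M < V x := by
    intro M
    have key : ∀ i j : Fin n, ∃ r : ℝ, 0 < r ∧
        ∀ z : ℝ, r ≤ |z| → G.Adj i j → M < f i j z := by
      intro i j
      by_cases hij : G.Adj i j
      · obtain ⟨r, hr0, hr⟩ := coercive_lb (M := M) (hcoer i j hij)
        exact ⟨r, hr0, fun z hz _ => hr z hz⟩
      · exact ⟨1, one_pos, fun z _ h => absurd h hij⟩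
    choose r hr0 hr using key
    have hneP : (Finset.univ : Finset (Fin n × Fin n)).Nonempty := Finset.univ_nonempty
    set c : ℝ := Finset.univ.sup' hneP (fun p : Fin n × Fin n => r p.1 p.2) with hc
    have hc_ge : ∀ i j, r i j ≤ c := fun i j =>
      Finset.le_sup' (f := fun p : Fin n × Fin n => r p.1 p.2) (Finset.mem_univ (i, j))
    obtain ⟨⟨i0, j0⟩, _, hi0⟩ := Finset.exists_mem_eq_sup' hneP (fun p : Fin n × Fin n => r p.1 p.2)
    have hc_pos : 0 < c := hc ▸ hi0 ▸ hr0 i0 j0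
    have hRnn : 0 ≤ Real.sqrt n * (((n:ℝ) - 1) * c) :=
      mul_nonneg (Real.sqrt_nonneg _) (mul_nonneg (by linarith) hc_pos.le)
    refine ⟨Real.sqrt n * (((n:ℝ) - 1) * c) + 1, by linarith, fun x hsum hR => ?_⟩
    -- find an edge with a large difference
    have hedge : ∃ i j, G.Adj i j ∧ c ≤ |x j - x i| := by
      by_contra hcon
      push_neg at hcon
      have hall : ∀ a b, G.Adj a b → |x a - x b| ≤ c := by
        intro a b hab
        rw [abs_sub_comm]
        exact le_of_lt (hcon a b hab)
      have hpair : ∀ k ℓ : Fin n, |x k - x ℓ| ≤ c * ((n:ℝ) - 1) := by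
        intro k ℓ
        obtain ⟨p⟩ := hG.preconnected k ℓ
        have hlen : ((p.toPath : G.Walk k ℓ).length : ℝ) ≤ (n:ℝ) - 1 := by
          have := p.toPath.2.length_lt
          rw [Fintype.card_fin] at this
          have h' : (p.toPath : G.Walk k ℓ).length + 1 ≤ n := this
          have := (Nat.cast_le (α := ℝ)).mpr h'
          push_cast at this
          linarith
        calc |x k - x ℓ| ≤ c * (p.toPath : G.Walk k ℓ).length := walk_bound x c hall _
          _ ≤ c * ((n:ℝ) - 1) := by nlinarith
      have hcoord : ∀ k : Fin n, |x k| ≤ c * ((n:ℝ) - 1) := by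
        intro k
        have hsum2 : (n:ℝ) * x k = ∑ ℓ : Fin n, (x k - x ℓ) := by
          rw [Finset.sum_sub_distrib, hsum]
          simp [mul_comm]
        have habs : |(n:ℝ) * x k| ≤ (n:ℝ) * (c * ((n:ℝ) - 1)) := by
          rw [hsum2]
          calc |∑ ℓ : Fin n, (x k - x ℓ)| ≤ ∑ ℓ : Fin n, |x k - x ℓ| :=
              Finset.abs_sum_le_sum_abs _ _
            _ ≤ ∑ _ℓ : Fin n, c * ((n:ℝ) - 1) := Finset.sum_le_sum fun ℓ _ => hpair k ℓ
            _ = (n:ℝ) * (c * ((n:ℝ) - 1)) := by simp [mul_comm]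
        rw [abs_mul, Nat.abs_cast] at habs
        nlinarith [abs_nonneg (x k)]
      have hnorm : ‖x‖ ≤ Real.sqrt n * (((n:ℝ) - 1) * c) := by
        rw [EuclideanSpace.norm_eq]
        have hsq : ∑ i : Fin n, ‖x i‖ ^ 2 ≤ (n:ℝ) * (c * ((n:ℝ) - 1)) ^ 2 := by
          calc ∑ i : Fin n, ‖x i‖ ^ 2 ≤ ∑ _i : Fin n, (c * ((n:ℝ) - 1)) ^ 2 :=
              Finset.sum_le_sum fun i _ => by
                have := hcoord i
                rw [Real.norm_eq_abs]
                nlinarith [abs_nonneg (x i)]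
            _ = (n:ℝ) * (c * ((n:ℝ) - 1)) ^ 2 := by simp [mul_comm]
        calc Real.sqrt (∑ i : Fin n, ‖x i‖ ^ 2) ≤ Real.sqrt ((n:ℝ) * (c * ((n:ℝ) - 1)) ^ 2) :=
            Real.sqrt_le_sqrt hsq
          _ = Real.sqrt n * (((n:ℝ) - 1) * c) := by
            rw [Real.sqrt_mul (by positivity), Real.sqrt_sq (by nlinarith)]
            ring
      linarith
    obtain ⟨i, j, hij, hcij⟩ := hedge
    have h1 : M < f i j (x j - x i) := hr i j _ (le_trans (hc_ge i j) hcij) hij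
    exact lt_of_lt_of_le h1 (hterm x i j ((SimpleGraph.mem_neighborFinset G i j).mpr hij))
  -- continuity of V
  have hVcont : Continuous V := by
    apply continuous_finset_sum
    intro i _
    apply continuous_finset_sum
    intro j _
    exact (hcont i j).comp (((EuclideanSpace.proj j).continuous).sub
      ((EuclideanSpace.proj i).continuous))
  refine ⟨fun M => (hcoerc M).imp fun R h => h.2, ?_⟩
  obtain ⟨R, hR0, hR⟩ := hcoerc (V 0)
  have hclosed : IsClosed {y : EuclideanSpace ℝ (Fin n) | (∑ i, y i) = 0} :=
    isClosed_eq (continuous_finset_sum _ fun i _ => (EuclideanSpace.proj i).continuous)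
      continuous_const
  have hcpt : IsCompact ({y : EuclideanSpace ℝ (Fin n) | (∑ i, y i) = 0} ∩
      Metric.closedBall 0 R) := (isCompact_closedBall 0 R).inter_left hclosed
  have h0mem : (0 : EuclideanSpace ℝ (Fin n)) ∈
      {y : EuclideanSpace ℝ (Fin n) | (∑ i, y i) = 0} ∩ Metric.closedBall 0 R := by
    constructor
    · simp [Set.mem_setOf_eq]
    · simpa using hR0
  obtain ⟨xstar, hxS, hmin⟩ := hcpt.exists_isMinOn ⟨0, h0mem⟩ hVcont.continuousOn
  refine ⟨xstar, fun x => ?_⟩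
  set s : ℝ := ∑ i, x i with hs
  set y : EuclideanSpace ℝ (Fin n) := WithLp.toLp 2 (fun i => x i - s / n) with hy
  have hysum : (∑ i, y i) = 0 := by
    rw [hy]
    simp only [PiLp.toLp_apply, Finset.sum_sub_distrib, ← hs]
    rw [Finset.sum_const, Finset.card_univ, Fintype.card_fin]
    rw [nsmul_eq_mul]
    field_simp
    ring
  have hVy : V y = V x := by
    apply Finset.sum_congr rfl
    intro i _
    apply Finset.sum_congr rfl
    intro j _
    congr 1
    simp only [hy, PiLp.toLp_apply]
    ring
  by_cases hyR : ‖y‖ ≤ R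
  · have hymem : y ∈ {y : EuclideanSpace ℝ (Fin n) | (∑ i, y i) = 0} ∩
        Metric.closedBall 0 R := ⟨hysum, by simpa [Metric.mem_closedBall, dist_zero_right]⟩
    calc V xstar ≤ V y := hmin hymem
      _ = V x := hVy
  · have h1 : V 0 < V y := hR y hysum (le_of_not_ge hyR)
    calc V xstar ≤ V 0 := hmin h0mem
      _ ≤ V y := le_of_lt h1
      _ = V x := hVy
end

section
/- Let V : ℝⁿ → ℝ be continuously differentiable and y absolutely continuous on [0,∞) with ẏ_i(t)(∂V/∂x_i)(y(t)) ≤ 0 for all i a.e., and suppose |(∂V/∂x_i)(y(t))| ≥ c > 0 for all t in an interval [t₁, t₂] for some fixed coordinate i. Then |y_i(t₂) - y_i(t₁)| ≤ (1/c)(V(y(t₁)) - V(y(t₂))). -/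
open MeasureTheory
open Set

lemma eucl_sum_single {n : ℕ} (x : EuclideanSpace ℝ (Fin n)) :
    x = ∑ j, x j • EuclideanSpace.single j 1 := by
  have := (EuclideanSpace.basisFun (Fin n) ℝ).sum_repr x
  simpa [EuclideanSpace.basisFun_apply, EuclideanSpace.basisFun_repr] using this.symm

lemma eucl_norm_le_sum {n : ℕ} (a : Fin n → ℝ) :
    ‖(∑ j, a j • EuclideanSpace.single j 1 : EuclideanSpace ℝ (Fin n))‖ ≤ ∑ j, |a j| := by
  refine (norm_sum_le _ _).trans ?_
  refine Finset.sum_le_sum fun j _ => ?_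
  rw [norm_smul, EuclideanSpace.norm_single]
  simp [abs_of_nonneg]

noncomputable def zcurve {n : ℕ} (y₀ : EuclideanSpace ℝ (Fin n)) (φ : Fin n → ℝ → ℝ)
    (t₁ t : ℝ) : EuclideanSpace ℝ (Fin n) :=
  ∑ j, (y₀ j + ∫ u in t₁..t, φ j u) • EuclideanSpace.single j 1

lemma zcurve_hasDerivAt {n : ℕ} (y₀ : EuclideanSpace ℝ (Fin n)) (φ : Fin n → ℝ → ℝ)
    (hφc : ∀ j, Continuous (φ j)) (t₁ t : ℝ) :
    HasDerivAt (zcurve y₀ φ t₁) (∑ j, φ j t • EuclideanSpace.single j 1) t := by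
  refine HasDerivAt.fun_sum fun j _ => ?_
  exact ((((hφc j).integral_hasStrictDerivAt t₁ t).hasDerivAt).const_add (y₀ j)).smul_const _

lemma zcurve_continuous {n : ℕ} (y₀ : EuclideanSpace ℝ (Fin n)) (φ : Fin n → ℝ → ℝ)
    (hφc : ∀ j, Continuous (φ j)) (t₁ : ℝ) : Continuous (zcurve y₀ φ t₁) :=
  continuous_iff_continuousAt.2 fun t => (zcurve_hasDerivAt y₀ φ hφc t₁ t).continuousAt

lemma zcurve_t₁ {n : ℕ} (y₀ : EuclideanSpace ℝ (Fin n)) (φ : Fin n → ℝ → ℝ) (t₁ : ℝ) :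
    zcurve y₀ φ t₁ t₁ = y₀ := by
  conv_rhs => rw [eucl_sum_single y₀]
  simp only [zcurve, intervalIntegral.integral_same, add_zero]

lemma zcurve_ftc {n : ℕ} (V : EuclideanSpace ℝ (Fin n) → ℝ) (hV : ContDiff ℝ 1 V)
    (y₀ : EuclideanSpace ℝ (Fin n)) (φ : Fin n → ℝ → ℝ) (hφc : ∀ j, Continuous (φ j))
    (t₁ t₂ : ℝ) :
    V (zcurve y₀ φ t₁ t₂) - V (zcurve y₀ φ t₁ t₁) =
      ∫ u in t₁..t₂, ∑ j, φ j u *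
        fderiv ℝ V (zcurve y₀ φ t₁ u) (EuclideanSpace.single j 1) := by
  have hdV : Continuous (fderiv ℝ V) := hV.continuous_fderiv one_ne_zero
  have hzc := zcurve_continuous y₀ φ hφc t₁
  have hψ : ∀ u : ℝ, HasDerivAt (fun t => V (zcurve y₀ φ t₁ t))
      ((fderiv ℝ V (zcurve y₀ φ t₁ u)) (∑ j, φ j u • EuclideanSpace.single j 1)) u :=
    fun u => ((hV.differentiable one_ne_zero (zcurve y₀ φ t₁ u)).hasFDerivAt).comp_hasDerivAt u
      (zcurve_hasDerivAt y₀ φ hφc t₁ u)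
  have hcontInt : Continuous fun u =>
      (fderiv ℝ V (zcurve y₀ φ t₁ u)) (∑ j, φ j u • EuclideanSpace.single j 1) :=
    (hdV.comp hzc).clm_apply (continuous_finset_sum _ fun j _ => ((hφc j).smul continuous_const))
  have hFTC := intervalIntegral.integral_eq_sub_of_hasDerivAt (f := fun t => V (zcurve y₀ φ t₁ t))
    (a := t₁) (b := t₂) (fun u _ => hψ u) (hcontInt.intervalIntegrable _ _)
  rw [← hFTC]
  refine intervalIntegral.integral_congr fun u _ => ?_
  rw [map_sum]
  exact Finset.sum_congr rfl fun j _ => by rw [_root_.map_smul, smul_eq_mul]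

lemma zcurve_close {n : ℕ} (y y' : ℝ → EuclideanSpace ℝ (Fin n)) (t₁ t₂ : ℝ) (ht : t₁ ≤ t₂)
    (hInt : ∀ j : Fin n, IntervalIntegrable (fun u => y' u j) volume t₁ t₂)
    (hAC : ∀ t : ℝ, t₁ ≤ t → t ≤ t₂ → ∀ j : Fin n,
      y t j - y t₁ j = ∫ u in t₁..t, y' u j)
    (φ : Fin n → ℝ → ℝ) (hφc : ∀ j, Continuous (φ j)) {εc : ℝ}
    (hφL1 : ∀ j, (∫ u in t₁..t₂, |y' u j - φ j u|) ≤ εc) :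
    ∀ t ∈ Icc t₁ t₂, ‖zcurve (y t₁) φ t₁ t - y t‖ ≤ (n : ℝ) * εc := by
  intro t htm
  have hyt : y t = ∑ j, (y t₁ j + ∫ u in t₁..t, y' u j) • EuclideanSpace.single j 1 := by
    conv_lhs => rw [eucl_sum_single (y t)]
    refine Finset.sum_congr rfl fun j _ => ?_
    congr 1
    have := hAC t htm.1 htm.2 j
    linarith
  have hdiff : zcurve (y t₁) φ t₁ t - y t = ∑ j,
      ((∫ u in t₁..t, φ j u) - ∫ u in t₁..t, y' u j) • EuclideanSpace.single j 1 := by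
    rw [hyt, zcurve, ← Finset.sum_sub_distrib]
    refine Finset.sum_congr rfl fun j _ => ?_
    rw [← sub_smul]
    congr 1
    ring
  rw [hdiff]
  refine (eucl_norm_le_sum _).trans ?_
  have hperj : ∀ j : Fin n, |(∫ u in t₁..t, φ j u) - ∫ u in t₁..t, y' u j| ≤ εc := by
    intro j
    have hsub : Set.uIcc t₁ t ⊆ Set.uIcc t₁ t₂ := by
      rw [uIcc_of_le htm.1, uIcc_of_le ht]
      exact Icc_subset_Icc le_rfl htm.2
    have hy't : IntervalIntegrable (fun u => y' u j) volume t₁ t := (hInt j).mono_set hsub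
    have hφt : IntervalIntegrable (φ j) volume t₁ t :=
      (((hφc j).intervalIntegrable t₁ t₂)).mono_set hsub
    have heq : (∫ u in t₁..t, φ j u) - ∫ u in t₁..t, y' u j
        = -(∫ u in t₁..t, (y' u j - φ j u)) := by
      rw [intervalIntegral.integral_sub hy't hφt]; ring
    rw [heq, abs_neg]
    calc |∫ u in t₁..t, (y' u j - φ j u)| ≤ ∫ u in t₁..t, |y' u j - φ j u| :=
          intervalIntegral.abs_integral_le_integral_abs htm.1
      _ ≤ ∫ u in t₁..t₂, |y' u j - φ j u| := by
          refine intervalIntegral.integral_mono_interval le_rfl htm.1 htm.2 ?_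
            (((hInt j).sub ((hφc j).intervalIntegrable t₁ t₂)).abs)
          exact Filter.Eventually.of_forall fun u => abs_nonneg _
      _ ≤ εc := hφL1 j
  calc ∑ j, |(∫ u in t₁..t, φ j u) - ∫ u in t₁..t, y' u j| ≤ ∑ _j : Fin n, εc :=
        Finset.sum_le_sum fun j _ => hperj j
    _ = (n:ℝ) * εc := by simp [Finset.sum_const, nsmul_eq_mul]
lemma integral_comparison {n : ℕ} (V : EuclideanSpace ℝ (Fin n) → ℝ) (hV : ContDiff ℝ 1 V)
    (y y' : ℝ → EuclideanSpace ℝ (Fin n)) (hy : Continuous y) (z : ℝ → EuclideanSpace ℝ (Fin n))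
    (hzc : Continuous z) (t₁ t₂ : ℝ) (ht : t₁ ≤ t₂)
    (hInt : ∀ j : Fin n, IntervalIntegrable (fun u => y' u j) volume t₁ t₂)
    (φ : Fin n → ℝ → ℝ) (hφc : ∀ j, Continuous (φ j))
    (M ε' εc : ℝ) (hM0 : 0 ≤ M)
    (hφL1 : ∀ j, (∫ u in t₁..t₂, |y' u j - φ j u|) ≤ εc)
    (hdVM : ∀ u ∈ Icc t₁ t₂, ‖fderiv ℝ V (z u)‖ ≤ M)
    (hdVclose : ∀ u ∈ Icc t₁ t₂, ‖fderiv ℝ V (z u) - fderiv ℝ V (y u)‖ ≤ ε') :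
    (∫ u in t₁..t₂, ∑ j, φ j u * fderiv ℝ V (z u) (EuclideanSpace.single j 1))
      ≤ (∫ u in t₁..t₂, ∑ j, y' u j * fderiv ℝ V (y u) (EuclideanSpace.single j 1))
        + ((n:ℝ) * M * εc + ε' * ∑ j, ∫ u in t₁..t₂, |y' u j|) := by
  have hdV : Continuous (fderiv ℝ V) := hV.continuous_fderiv one_ne_zero
  have hdiffii : ∀ j : Fin n, IntervalIntegrable (fun u => y' u j - φ j u) volume t₁ t₂ :=
    fun j => (hInt j).sub ((hφc j).intervalIntegrable t₁ t₂)
  -- pointwise comparison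
  have hpt : ∀ u ∈ Icc t₁ t₂,
      ∑ j, φ j u * (fderiv ℝ V (z u)) (EuclideanSpace.single j 1) ≤
      ∑ j, (y' u j * (fderiv ℝ V (y u)) (EuclideanSpace.single j 1)
        + (M * |y' u j - φ j u| + ε' * |y' u j|)) := by
    intro u hu
    refine Finset.sum_le_sum fun j _ => ?_
    set Gz := (fderiv ℝ V (z u)) (EuclideanSpace.single j 1) with hGz
    set Gy := (fderiv ℝ V (y u)) (EuclideanSpace.single j 1) with hGy
    have hsingle : ‖(EuclideanSpace.single j 1 : EuclideanSpace ℝ (Fin n))‖ = 1 := by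
      rw [EuclideanSpace.norm_single]; norm_num
    have h1 : |Gz| ≤ M := by
      have := (fderiv ℝ V (z u)).le_opNorm (EuclideanSpace.single j 1)
      rw [hsingle, mul_one, Real.norm_eq_abs] at this
      exact this.trans (hdVM u hu)
    have h2 : |Gz - Gy| ≤ ε' := by
      have happ : Gz - Gy
          = (fderiv ℝ V (z u) - fderiv ℝ V (y u)) (EuclideanSpace.single j 1) := by
        rw [ContinuousLinearMap.sub_apply]
      have := (fderiv ℝ V (z u) - fderiv ℝ V (y u)).le_opNorm (EuclideanSpace.single j 1)
      rw [hsingle, mul_one, Real.norm_eq_abs, ← happ] at this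
      exact this.trans (hdVclose u hu)
    have key : φ j u * Gz = y' u j * Gy + (φ j u - y' u j) * Gz + y' u j * (Gz - Gy) := by ring
    have e1 : (φ j u - y' u j) * Gz ≤ M * |y' u j - φ j u| := by
      calc (φ j u - y' u j) * Gz ≤ |(φ j u - y' u j) * Gz| := le_abs_self _
        _ = |φ j u - y' u j| * |Gz| := abs_mul _ _
        _ ≤ |y' u j - φ j u| * M := by
            rw [abs_sub_comm]
            exact mul_le_mul_of_nonneg_left h1 (abs_nonneg _)
        _ = M * |y' u j - φ j u| := mul_comm _ _
    have e2 : y' u j * (Gz - Gy) ≤ ε' * |y' u j| := by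
      calc y' u j * (Gz - Gy) ≤ |y' u j * (Gz - Gy)| := le_abs_self _
        _ = |y' u j| * |Gz - Gy| := abs_mul _ _
        _ ≤ |y' u j| * ε' := mul_le_mul_of_nonneg_left h2 (abs_nonneg _)
        _ = ε' * |y' u j| := mul_comm _ _
    linarith
  -- integrabilities
  have hii1 : ∀ j : Fin n, IntervalIntegrable
      (fun u => y' u j * (fderiv ℝ V (y u)) (EuclideanSpace.single j 1)) volume t₁ t₂ :=
    fun j => (hInt j).mul_continuousOn ((hdV.comp hy).clm_apply continuous_const).continuousOn
  have hiiL : IntervalIntegrable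
      (fun u => ∑ j, φ j u * (fderiv ℝ V (z u)) (EuclideanSpace.single j 1)) volume t₁ t₂ :=
    (continuous_finset_sum _ fun j _ =>
      (hφc j).mul ((hdV.comp hzc).clm_apply continuous_const)).intervalIntegrable _ _
  have hiiR : ∀ j : Fin n, IntervalIntegrable
      (fun u => y' u j * (fderiv ℝ V (y u)) (EuclideanSpace.single j 1)
        + (M * |y' u j - φ j u| + ε' * |y' u j|)) volume t₁ t₂ :=
    fun j => (hii1 j).add ((((hdiffii j).abs).const_mul M).add (((hInt j).abs).const_mul ε'))
  have hiiRsum : IntervalIntegrable (fun u => ∑ j,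
      (y' u j * (fderiv ℝ V (y u)) (EuclideanSpace.single j 1)
        + (M * |y' u j - φ j u| + ε' * |y' u j|))) volume t₁ t₂ := by
    have h := IntervalIntegrable.sum (μ := volume) (a := t₁) (b := t₂) Finset.univ
      (f := fun (j : Fin n) u => y' u j * (fderiv ℝ V (y u)) (EuclideanSpace.single j 1)
        + (M * |y' u j - φ j u| + ε' * |y' u j|)) (fun j _ => hiiR j)
    simpa [Finset.sum_fn] using h
  have hIcomp := intervalIntegral.integral_mono_on ht hiiL hiiRsum hpt
  refine hIcomp.trans ?_
  rw [intervalIntegral.integral_finset_sum (fun j _ => hiiR j)]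
  have hsplit : ∀ j : Fin n, (∫ u in t₁..t₂,
      (y' u j * (fderiv ℝ V (y u)) (EuclideanSpace.single j 1)
        + (M * |y' u j - φ j u| + ε' * |y' u j|)))
      = (∫ u in t₁..t₂, y' u j * (fderiv ℝ V (y u)) (EuclideanSpace.single j 1))
        + (M * (∫ u in t₁..t₂, |y' u j - φ j u|) + ε' * ∫ u in t₁..t₂, |y' u j|) := by
    intro j
    rw [intervalIntegral.integral_add (hii1 j)
      ((((hdiffii j).abs).const_mul M).add (((hInt j).abs).const_mul ε')),
      intervalIntegral.integral_add (((hdiffii j).abs).const_mul M)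
        (((hInt j).abs).const_mul ε'),
      intervalIntegral.integral_const_mul, intervalIntegral.integral_const_mul]
  rw [Finset.sum_congr rfl fun j _ => hsplit j, Finset.sum_add_distrib, Finset.sum_add_distrib]
  rw [intervalIntegral.integral_finset_sum (fun j _ => hii1 j)]
  have hb1 : ∑ j, M * (∫ u in t₁..t₂, |y' u j - φ j u|) ≤ (n:ℝ) * M * εc := by
    calc ∑ j, M * (∫ u in t₁..t₂, |y' u j - φ j u|) ≤ ∑ _j : Fin n, M * εc :=
          Finset.sum_le_sum fun j _ => mul_le_mul_of_nonneg_left (hφL1 j) hM0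
      _ = (n:ℝ) * M * εc := by
          rw [Finset.sum_const]
          simp [nsmul_eq_mul]
          ring
  have hb2 : ∑ j, ε' * (∫ u in t₁..t₂, |y' u j|)
      = ε' * ∑ j, ∫ u in t₁..t₂, |y' u j| := by rw [Finset.mul_sum]
  linarith
lemma approx_cont (f : ℝ → ℝ) (t₁ t₂ : ℝ) (ht : t₁ ≤ t₂)
    (hf : IntervalIntegrable f volume t₁ t₂) {ε : ℝ} (hε : 0 < ε) :
    ∃ φ : ℝ → ℝ, Continuous φ ∧ (∫ u in t₁..t₂, |f u - φ u|) ≤ ε := by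
  set F : ℝ → ℝ := (Icc t₁ t₂).indicator f with hFdef
  have hFon : IntegrableOn f (Icc t₁ t₂) volume :=
    (integrableOn_Icc_iff_integrableOn_Ioc).2
      ((intervalIntegrable_iff_integrableOn_Ioc_of_le ht).1 hf)
  have hF : Integrable F volume := (integrable_indicator_iff measurableSet_Icc).2 hFon
  obtain ⟨φ, -, hL1, hφc, hφint⟩ := hF.exists_hasCompactSupport_integral_sub_le hε
  refine ⟨φ, hφc, ?_⟩
  rw [intervalIntegral.integral_of_le ht]
  have h1 : ∫ u in Ioc t₁ t₂, |f u - φ u| = ∫ u in Ioc t₁ t₂, ‖F u - φ u‖ := by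
    refine setIntegral_congr_fun measurableSet_Ioc fun u hu => ?_
    rw [hFdef, indicator_of_mem (Ioc_subset_Icc_self hu), Real.norm_eq_abs]
  rw [h1]
  refine le_trans (setIntegral_le_integral ((hF.sub hφint).norm) ?_) hL1
  exact Filter.Eventually.of_forall fun x => norm_nonneg _

set_option maxHeartbeats 1000000 in
lemma chain_ineq {n : ℕ} (V : EuclideanSpace ℝ (Fin n) → ℝ) (hV : ContDiff ℝ 1 V)
    (y y' : ℝ → EuclideanSpace ℝ (Fin n)) (hy : Continuous y)
    (t₁ t₂ : ℝ) (ht : t₁ ≤ t₂)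
    (hInt : ∀ j : Fin n, IntervalIntegrable (fun u => y' u j) volume t₁ t₂)
    (hAC : ∀ t : ℝ, t₁ ≤ t → t ≤ t₂ → ∀ j : Fin n,
      y t j - y t₁ j = ∫ u in t₁..t, y' u j) :
    V (y t₂) - V (y t₁) ≤
      ∫ u in t₁..t₂, ∑ j, y' u j * fderiv ℝ V (y u) (EuclideanSpace.single j 1) := by
  classical
  set I := ∫ u in t₁..t₂, ∑ j, y' u j * fderiv ℝ V (y u) (EuclideanSpace.single j 1) with hI
  by_contra hcon
  push_neg at hcon
  set ε₀ := (V (y t₂) - V (y t₁) - I) / 2 with hε₀def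
  have hε₀ : 0 < ε₀ := by simp only [hε₀def]; linarith
  suffices hsuff : V (y t₂) - V (y t₁) ≤ I + ε₀ by
    simp only [hε₀def] at hsuff; linarith
  have hdV : Continuous (fderiv ℝ V) := hV.continuous_fderiv one_ne_zero
  set S : Set (EuclideanSpace ℝ (Fin n)) := y '' Icc t₁ t₂ with hSdef
  have hS : IsCompact S := isCompact_Icc.image hy
  set K := Metric.cthickening 1 S with hKdef
  have hK : IsCompact K :=
    Metric.isCompact_of_isClosed_isBounded Metric.isClosed_cthickening
      (hS.isBounded.cthickening)
  obtain ⟨M₀, hM₀⟩ := hK.exists_bound_of_continuousOn hdV.continuousOn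
  set M := max M₀ 0 with hMdef
  have hM0 : 0 ≤ M := le_max_right _ _
  have hMK : ∀ x ∈ K, ‖fderiv ℝ V x‖ ≤ M := fun x hx => (hM₀ x hx).trans (le_max_left _ _)
  set A := ∑ j, ∫ u in t₁..t₂, |y' u j| with hAdef
  have hA0 : 0 ≤ A := Finset.sum_nonneg fun j _ =>
    intervalIntegral.integral_nonneg ht fun u _ => abs_nonneg _
  set ε' := ε₀ / (2 * (A + 1)) with hε'def
  have hε' : 0 < ε' := by positivity
  have hUC := hK.uniformContinuousOn_of_continuous hdV.continuousOn
  rw [Metric.uniformContinuousOn_iff] at hUC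
  obtain ⟨δ, hδpos, hδ⟩ := hUC ε' hε'
  have hVct : ContinuousAt V (y t₂) := hV.continuous.continuousAt
  rw [Metric.continuousAt_iff] at hVct
  obtain ⟨δ₂, hδ₂pos, hδ₂⟩ := hVct ε' hε'
  set ε₁ := min (min (δ / (n + 1)) (δ₂ / (n + 1)))
      (min (1 / (n + 1)) (ε₀ / (2 * (n * M + 1)))) with hε₁def
  have hε₁ : 0 < ε₁ :=
    lt_min (lt_min (by positivity) (by positivity)) (lt_min (by positivity) (by positivity))
  have hnpos : (0:ℝ) < (n:ℝ) + 1 := by positivity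
  have hnδ : (n:ℝ) * ε₁ < δ := by
    have h1 : ε₁ ≤ δ / (n + 1) := le_trans (min_le_left _ _) (min_le_left _ _)
    have h2 : (n:ℝ) * ε₁ ≤ (n:ℝ) * (δ / (n + 1)) :=
      mul_le_mul_of_nonneg_left h1 (Nat.cast_nonneg n)
    have h3 : (n:ℝ) * (δ / (n + 1)) < δ := by
      rw [mul_div_assoc', div_lt_iff₀ hnpos]
      nlinarith [Nat.cast_nonneg (α := ℝ) n]
    linarith
  have hnδ₂ : (n:ℝ) * ε₁ < δ₂ := by
    have h1 : ε₁ ≤ δ₂ / (n + 1) := le_trans (min_le_left _ _) (min_le_right _ _)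
    have h2 : (n:ℝ) * ε₁ ≤ (n:ℝ) * (δ₂ / (n + 1)) :=
      mul_le_mul_of_nonneg_left h1 (Nat.cast_nonneg n)
    have h3 : (n:ℝ) * (δ₂ / (n + 1)) < δ₂ := by
      rw [mul_div_assoc', div_lt_iff₀ hnpos]
      nlinarith [Nat.cast_nonneg (α := ℝ) n]
    linarith
  have hn1 : (n:ℝ) * ε₁ ≤ 1 := by
    have h1 : ε₁ ≤ 1 / (n + 1) := le_trans (min_le_right _ _) (min_le_left _ _)
    have h2 : (n:ℝ) * ε₁ ≤ (n:ℝ) * (1 / (n + 1)) :=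
      mul_le_mul_of_nonneg_left h1 (Nat.cast_nonneg n)
    have h3 : (n:ℝ) * (1 / (n + 1)) ≤ 1 := by
      rw [mul_div_assoc', div_le_iff₀ hnpos]
      nlinarith [Nat.cast_nonneg (α := ℝ) n]
    linarith
  have hnM : (n:ℝ) * M * ε₁ ≤ ε₀ / 2 := by
    have h1 : ε₁ ≤ ε₀ / (2 * (n * M + 1)) := le_trans (min_le_right _ _) (min_le_right _ _)
    have hnM0 : (0:ℝ) ≤ (n:ℝ) * M := mul_nonneg (Nat.cast_nonneg n) hM0
    have h2 : (n:ℝ) * M * ε₁ ≤ (n:ℝ) * M * (ε₀ / (2 * (n * M + 1))) :=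
      mul_le_mul_of_nonneg_left h1 hnM0
    have h3 : (n:ℝ) * M * (ε₀ / (2 * (n * M + 1))) ≤ ε₀ / 2 := by
      rw [mul_div_assoc', div_le_div_iff₀ (by positivity) (by norm_num : (0:ℝ) < 2)]
      nlinarith [hnM0, hε₀.le]
    linarith
  -- approximating continuous derivatives
  have hφex : ∀ j : Fin n, ∃ φ : ℝ → ℝ, Continuous φ ∧
      (∫ u in t₁..t₂, |y' u j - φ u|) ≤ ε₁ :=
    fun j => approx_cont _ _ _ ht (hInt j) hε₁
  choose φ hφc hφL1 using hφex
  set z : ℝ → EuclideanSpace ℝ (Fin n) := zcurve (y t₁) φ t₁ with hzdef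
  have hzc : Continuous z := zcurve_continuous _ _ hφc _
  have hzclose : ∀ t ∈ Icc t₁ t₂, ‖z t - y t‖ ≤ (n:ℝ) * ε₁ :=
    zcurve_close y y' t₁ t₂ ht hInt hAC φ hφc hφL1
  have hyK : ∀ t ∈ Icc t₁ t₂, y t ∈ K := fun t htm =>
    Metric.self_subset_cthickening S ⟨t, htm, rfl⟩
  have hzK : ∀ t ∈ Icc t₁ t₂, z t ∈ K := by
    intro t htm
    refine Metric.mem_cthickening_of_dist_le (z t) (y t) 1 S ⟨t, htm, rfl⟩ ?_
    rw [dist_eq_norm]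
    exact (hzclose t htm).trans hn1
  have hdVclose : ∀ t ∈ Icc t₁ t₂, ‖fderiv ℝ V (z t) - fderiv ℝ V (y t)‖ ≤ ε' := by
    intro t htm
    have := hδ (z t) (hzK t htm) (y t) (hyK t htm)
      (by rw [dist_eq_norm]; exact lt_of_le_of_lt (hzclose t htm) hnδ)
    rw [dist_eq_norm] at this
    exact this.le
  have hdVM : ∀ t ∈ Icc t₁ t₂, ‖fderiv ℝ V (z t)‖ ≤ M := fun t htm => hMK _ (hzK t htm)
  have hmain := (zcurve_ftc V hV (y t₁) φ hφc t₁ t₂).trans_le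
    (integral_comparison V hV y y' hy z hzc t₁ t₂ ht hInt φ hφc M ε' ε₁ hM0 hφL1 hdVM hdVclose)
  have hend : |V (z t₂) - V (y t₂)| < ε' := by
    have hd : dist (z t₂) (y t₂) < δ₂ := by
      rw [dist_eq_norm]
      exact lt_of_le_of_lt (hzclose t₂ ⟨ht, le_rfl⟩) hnδ₂
    have := hδ₂ hd
    rwa [Real.dist_eq] at this
  have habs : V (y t₂) - V (z t₂) ≤ ε' := by
    rw [abs_sub_comm] at hend
    linarith [(le_abs_self (V (y t₂) - V (z t₂))).trans hend.le]
  have hzt₁ : z t₁ = y t₁ := zcurve_t₁ (y t₁) φ t₁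
  have hεA : ε' * (1 + A) ≤ ε₀ / 2 := by
    rw [hε'def, div_mul_eq_mul_div, div_le_div_iff₀ (by positivity) (by norm_num : (0:ℝ) < 2)]
    nlinarith [hε₀.le, hA0]
  rw [← hzdef, hzt₁] at hmain
  calc V (y t₂) - V (y t₁) = (V (y t₂) - V (z t₂)) + (V (z t₂) - V (y t₁)) := by ring
    _ ≤ ε' + (I + ((n:ℝ) * M * ε₁ + ε' * A)) := add_le_add habs hmain
    _ ≤ I + ε₀ := by nlinarith [hεA, hnM]

set_option maxHeartbeats 1000000 in

/-- If along a coordinate-wise decreasing trajectory the `i`-th partial derivative of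
`V` stays bounded away from zero in absolute value by `c > 0` on `[t₁, t₂]`, then the
`i`-th coordinate moves at most `(1/c)(V(y(t₁)) - V(y(t₂)))`. -/
theorem coordinate_displacement_bound (n : ℕ) (V : EuclideanSpace ℝ (Fin n) → ℝ)
    (hV : ContDiff ℝ 1 V)
    (y y' : ℝ → EuclideanSpace ℝ (Fin n)) (hy : Continuous y)
    (t₁ t₂ : ℝ) (ht₀ : 0 ≤ t₁) (ht : t₁ ≤ t₂)
    (hInt : ∀ j : Fin n, IntervalIntegrable (fun u => y' u j) volume t₁ t₂)
    (hAC : ∀ s t : ℝ, t₁ ≤ s → s ≤ t → t ≤ t₂ → ∀ j : Fin n,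
      y t j - y s j = ∫ u in s..t, y' u j)
    (hdecr : ∀ᵐ t ∂(volume.restrict (Set.Icc t₁ t₂)),
      ∀ j : Fin n, y' t j * fderiv ℝ V (y t) (EuclideanSpace.single j 1) ≤ 0)
    (i : Fin n) (c : ℝ) (hc : 0 < c)
    (hgrad : ∀ t ∈ Set.Icc t₁ t₂,
      c ≤ |fderiv ℝ V (y t) (EuclideanSpace.single i 1)|) :
    |y t₂ i - y t₁ i| ≤ (1 / c) * (V (y t₁) - V (y t₂)) := by
  classical
  have hAC' : ∀ t : ℝ, t₁ ≤ t → t ≤ t₂ → ∀ j : Fin n,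
      y t j - y t₁ j = ∫ u in t₁..t, y' u j :=
    fun t h1 h2 j => hAC t₁ t le_rfl h1 h2 j
  have hchain := chain_ineq V hV y y' hy t₁ t₂ ht hInt hAC'
  have hdV : Continuous (fderiv ℝ V) := hV.continuous_fderiv one_ne_zero
  have hgc : ∀ j : Fin n, Continuous
      (fun u => fderiv ℝ V (y u) (EuclideanSpace.single j 1)) :=
    fun j => (hdV.comp hy).clm_apply continuous_const
  have hii : ∀ j : Fin n, IntervalIntegrable
      (fun u => y' u j * fderiv ℝ V (y u) (EuclideanSpace.single j 1)) volume t₁ t₂ :=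
    fun j => (hInt j).mul_continuousOn (hgc j).continuousOn
  have hiiSum : IntervalIntegrable
      (fun u => ∑ j, y' u j * fderiv ℝ V (y u) (EuclideanSpace.single j 1)) volume t₁ t₂ := by
    have h := IntervalIntegrable.sum (μ := volume) (a := t₁) (b := t₂) Finset.univ
      (f := fun (j : Fin n) u => y' u j * fderiv ℝ V (y u) (EuclideanSpace.single j 1))
      (fun j _ => hii j)
    simpa [Finset.sum_fn] using h
  have hiiAbs : IntervalIntegrable (fun u => -c * |y' u i|) volume t₁ t₂ :=
    ((hInt i).abs).const_mul _
  have h1 : (∫ u in t₁..t₂, ∑ j, y' u j * fderiv ℝ V (y u) (EuclideanSpace.single j 1))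
      ≤ ∫ u in t₁..t₂, y' u i * fderiv ℝ V (y u) (EuclideanSpace.single i 1) := by
    refine intervalIntegral.integral_mono_ae_restrict ht hiiSum (hii i) ?_
    filter_upwards [hdecr] with u hu
    have hrest : ∑ j ∈ Finset.univ.erase i,
        y' u j * fderiv ℝ V (y u) (EuclideanSpace.single j 1) ≤ 0 :=
      Finset.sum_nonpos fun j _ => hu j
    have hsplit : ∑ j, y' u j * fderiv ℝ V (y u) (EuclideanSpace.single j 1)
        = y' u i * fderiv ℝ V (y u) (EuclideanSpace.single i 1)
          + ∑ j ∈ Finset.univ.erase i,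
            y' u j * fderiv ℝ V (y u) (EuclideanSpace.single j 1) :=
      (Finset.add_sum_erase _ _ (Finset.mem_univ i)).symm
    linarith
  have h2 : (∫ u in t₁..t₂, y' u i * fderiv ℝ V (y u) (EuclideanSpace.single i 1))
      ≤ ∫ u in t₁..t₂, -c * |y' u i| := by
    refine intervalIntegral.integral_mono_ae_restrict ht (hii i) hiiAbs ?_
    filter_upwards [hdecr, ae_restrict_mem measurableSet_Icc] with u hu hmem
    have hnp : y' u i * fderiv ℝ V (y u) (EuclideanSpace.single i 1) ≤ 0 := hu i
    have hgi : c ≤ |fderiv ℝ V (y u) (EuclideanSpace.single i 1)| := hgrad u hmem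
    have e1 : |y' u i| * c ≤ |y' u i| * |fderiv ℝ V (y u) (EuclideanSpace.single i 1)| :=
      mul_le_mul_of_nonneg_left hgi (abs_nonneg _)
    have e2 : y' u i * fderiv ℝ V (y u) (EuclideanSpace.single i 1)
        = -(|y' u i| * |fderiv ℝ V (y u) (EuclideanSpace.single i 1)|) := by
      rw [← abs_mul, abs_of_nonpos hnp, neg_neg]
    nlinarith [e1, e2]
  have h3 : (∫ u in t₁..t₂, -c * |y' u i|) = -c * ∫ u in t₁..t₂, |y' u i| :=
    intervalIntegral.integral_const_mul _ _
  set B := ∫ u in t₁..t₂, |y' u i| with hB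
  have hfinal : V (y t₂) - V (y t₁) ≤ -c * B := by
    rw [← h3]
    exact hchain.trans (h1.trans h2)
  have hACi : y t₂ i - y t₁ i = ∫ u in t₁..t₂, y' u i := hAC t₁ t₂ le_rfl ht le_rfl i
  have habs : |y t₂ i - y t₁ i| ≤ B := by
    rw [hACi]
    exact intervalIntegral.abs_integral_le_integral_abs ht
  have hBD : B ≤ (1 / c) * (V (y t₁) - V (y t₂)) := by
    rw [one_div, inv_mul_eq_div, le_div_iff₀ hc]
    nlinarith [hfinal]
  exact habs.trans hBD
end
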